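/- arXiv:2202.07578 — 3 statements merged into one kernel-verified Lean document; each statement's English description precedes it below -/
import Mathlib

section
/- (Wiener) Let 𝓔 ⊆ L²(𝕋) be a closed subspace invariant under multiplication by z and satisfying z·𝓔 = 𝓔 (doubly invariant). Then there exists a Borel set A ⊆ 𝕋 such that 𝓔 = 1_A · L²(𝕋). -/
open MeasureTheory Complex

noncomputable instance : Fact (0 < 2 * Real.pi) := ⟨by positivity⟩

open scoped ENNReal NNReal

section Aux

variable {T : ℝ} [hT : Fact (0 < T)]

open AddCircle

/-- A real integrable function on the circle whose integral against every continuous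
function vanishes is a.e. zero. -/
lemma wiener_aux_real (r : AddCircle T → ℝ) (hr : Integrable r haarAddCircle)
    (h : ∀ u : C(AddCircle T, ℝ), (∫ x, u x * r x ∂haarAddCircle) = 0) :
    r =ᵐ[haarAddCircle] 0 := by
  set μ : Measure (AddCircle T) := haarAddCircle with hμdef
  have hmeas := hr.aemeasurable
  have hfm : AEMeasurable (fun x => ENNReal.ofReal (r x)) μ := hmeas.ennreal_ofReal
  have hgm : AEMeasurable (fun x => ENNReal.ofReal (-r x)) μ := hmeas.neg.ennreal_ofReal
  have hfin : ∀ s : AddCircle T → ℝ, Integrable s μ →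
      IsFiniteMeasure (μ.withDensity fun x => ENNReal.ofReal (s x)) := by
    intro s hs
    refine isFiniteMeasure_withDensity (ne_of_lt ?_)
    refine lt_of_le_of_lt (lintegral_mono fun x => ?_) hs.2
    rw [← ofReal_norm, Real.norm_eq_abs]
    exact ENNReal.ofReal_le_ofReal (le_abs_self _)
  haveI := hfin r hr
  have key : μ.withDensity (fun x => ENNReal.ofReal (r x))
      = μ.withDensity (fun x => ENNReal.ofReal (-r x)) := by
    apply ext_of_forall_lintegral_eq_of_IsFiniteMeasure
    intro u
    have hu : Measurable fun x => (u x : ℝ≥0∞) :=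
      measurable_coe_nnreal_ennreal.comp u.continuous.measurable
    rw [lintegral_withDensity_eq_lintegral_mul₀ hfm hu.aemeasurable,
        lintegral_withDensity_eq_lintegral_mul₀ hgm hu.aemeasurable]
    -- a uniform bound for `u`
    have hbdd : ∃ C, ∀ x, ‖(u x : ℝ)‖ ≤ C := by
      obtain ⟨x₀, -, hx₀⟩ := isCompact_univ.exists_isMaxOn Set.univ_nonempty
        ((NNReal.continuous_coe.comp u.continuous)).continuousOn
      exact ⟨(u x₀ : ℝ), fun x => by
        simpa [Real.norm_eq_abs, _root_.abs_of_nonneg (u x).2] using hx₀ (Set.mem_univ x)⟩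
    have hint : ∀ s : AddCircle T → ℝ, Integrable s μ →
        Integrable (fun x => (u x : ℝ) * max (s x) 0) μ := fun s hs =>
      hbdd.elim fun C hC => hs.pos_part.bdd_mul ((NNReal.continuous_coe.comp u.continuous)).aestronglyMeasurable (Filter.Eventually.of_forall hC)
    have e : ∀ s : AddCircle T → ℝ, Integrable s μ →
        (∫⁻ x, ((fun x => ENNReal.ofReal (s x)) * fun x => (u x : ℝ≥0∞)) x ∂μ)
          = ENNReal.ofReal (∫ x, (u x : ℝ) * max (s x) 0 ∂μ) := by
      intro s hs
      rw [ofReal_integral_eq_lintegral_ofReal (hint s hs)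
        (Filter.Eventually.of_forall fun x => mul_nonneg (u x).coe_nonneg (le_max_right _ _))]
      refine lintegral_congr fun x => ?_
      simp only [Pi.mul_apply]
      rcases le_or_gt (s x) 0 with hsx | hsx
      · rw [ENNReal.ofReal_eq_zero.2 hsx, max_eq_right hsx, mul_zero,
          ENNReal.ofReal_zero, zero_mul]
      · rw [max_eq_left hsx.le, ENNReal.ofReal_mul (u x).coe_nonneg, ENNReal.ofReal_coe_nnreal,
          mul_comm]
    rw [e r hr, e (fun x => -r x) hr.neg']
    congr 1
    have h1 : Integrable (fun x => (u x : ℝ) * max (r x) 0) μ := hint r hr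
    have h2 : Integrable (fun x => (u x : ℝ) * max (-r x) 0) μ := hint (fun x => -r x) hr.neg'
    have hsub : (∫ x, (u x : ℝ) * max (r x) 0 ∂μ) - (∫ x, (u x : ℝ) * max (-r x) 0 ∂μ) = 0 := by
      rw [← integral_sub h1 h2]
      have hptw : ∀ x, (u x : ℝ) * max (r x) 0 - (u x : ℝ) * max (-(r x)) 0
          = (u x : ℝ) * r x := by
        intro x
        rw [← mul_sub]
        congr 1
        rcases le_total (r x) 0 with hx | hx
        · rw [max_eq_right hx, max_eq_left (by linarith), zero_sub, neg_neg]
        · rw [max_eq_left hx, max_eq_right (by linarith), sub_zero]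
      calc (∫ x, ((u x : ℝ) * max (r x) 0 - (u x : ℝ) * max (-r x) 0) ∂μ)
          = ∫ x, (u x : ℝ) * r x ∂μ := by
            refine integral_congr_ae (Filter.Eventually.of_forall fun x => ?_)
            exact hptw x
        _ = 0 := h ⟨fun x => (u x : ℝ), NNReal.continuous_coe.comp u.continuous⟩
    linarith [hsub]
  have hae := (withDensity_eq_iff_of_sigmaFinite hfm hgm).mp key
  filter_upwards [hae] with x hx
  rcases lt_trichotomy (r x) 0 with h1 | h1 | h1
  · exfalso
    rw [ENNReal.ofReal_eq_zero.2 h1.le] at hx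
    exact (ENNReal.ofReal_pos.2 (neg_pos.2 h1)).ne' hx.symm
  · exact h1
  · exfalso
    rw [ENNReal.ofReal_eq_zero.2 (by linarith : -r x ≤ 0)] at hx
    exact (ENNReal.ofReal_pos.2 h1).ne' hx

/-- A complex integrable function on the circle whose integral against every continuous
function vanishes is a.e. zero. -/
lemma wiener_aux_complex (h : AddCircle T → ℂ) (hi : Integrable h haarAddCircle)
    (hyp : ∀ u : C(AddCircle T, ℂ), (∫ x, u x * h x ∂haarAddCircle) = 0) :
    h =ᵐ[haarAddCircle] 0 := by
  have hint : ∀ u : C(AddCircle T, ℝ),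
      Integrable (fun x => ((u x : ℂ)) * h x) haarAddCircle := fun u =>
    hi.bdd_mul (c := ‖u‖) (Complex.continuous_ofReal.comp u.continuous).aestronglyMeasurable
      (Filter.Eventually.of_forall fun x => by rw [Complex.norm_real]; exact u.norm_coe_le_norm x)
  have hre : (fun x => RCLike.re (h x)) =ᵐ[haarAddCircle] 0 := by
    apply wiener_aux_real _ hi.re
    intro u
    have h0 := hyp ⟨fun x => (u x : ℂ), Complex.continuous_ofReal.comp u.continuous⟩
    simp only [ContinuousMap.coe_mk] at h0
    have : (∫ x, u x * RCLike.re (h x) ∂haarAddCircle)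
        = RCLike.re (∫ x, (u x : ℂ) * h x ∂haarAddCircle) := by
      rw [← integral_re (hint u)]
      refine integral_congr_ae (Filter.Eventually.of_forall fun x => ?_)
      simp [Complex.mul_re]
    rw [this, h0]
    simp
  have him : (fun x => RCLike.im (h x)) =ᵐ[haarAddCircle] 0 := by
    apply wiener_aux_real _ hi.im
    intro u
    have h0 := hyp ⟨fun x => (u x : ℂ), Complex.continuous_ofReal.comp u.continuous⟩
    simp only [ContinuousMap.coe_mk] at h0
    have : (∫ x, u x * RCLike.im (h x) ∂haarAddCircle)
        = RCLike.im (∫ x, (u x : ℂ) * h x ∂haarAddCircle) := by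
      rw [← integral_im (hint u)]
      refine integral_congr_ae (Filter.Eventually.of_forall fun x => ?_)
      simp [Complex.mul_im]
    rw [this, h0]
    simp
  filter_upwards [hre, him] with x h1 h2
  rw [Pi.zero_apply] at h1 h2 ⊢
  simp only [RCLike.re_to_complex, RCLike.im_to_complex] at h1 h2
  exact Complex.ext h1 h2

/-- Uniqueness of Fourier coefficients for integrable functions on the circle. -/
lemma wiener_aux_fourier (h : AddCircle T → ℂ) (hi : Integrable h haarAddCircle)
    (hc : ∀ n : ℤ, fourierCoeff h n = 0) : h =ᵐ[haarAddCircle] 0 := by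
  apply wiener_aux_complex h hi
  have hint : ∀ u : C(AddCircle T, ℂ), Integrable (fun x => u x * h x) haarAddCircle :=
    fun u => hi.bdd_mul (c := ‖u‖) u.continuous.aestronglyMeasurable (Filter.Eventually.of_forall fun x => u.norm_coe_le_norm x)
  let L : C(AddCircle T, ℂ) →ₗ[ℂ] ℂ :=
    { toFun := fun u => ∫ x, u x * h x ∂haarAddCircle
      map_add' := fun u v => by
        simp only [ContinuousMap.add_apply, add_mul]
        exact integral_add (hint u) (hint v)
      map_smul' := fun c u => by
        simp only [ContinuousMap.smul_apply, smul_eq_mul, RingHom.id_apply, mul_assoc]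
        exact integral_const_mul c _ }
  have hbound : ∀ u : C(AddCircle T, ℂ),
      ‖L u‖ ≤ (∫ x, ‖h x‖ ∂haarAddCircle) * ‖u‖ := by
    intro u
    calc ‖∫ x, u x * h x ∂haarAddCircle‖
        ≤ ∫ x, ‖u x * h x‖ ∂haarAddCircle := norm_integral_le_integral_norm _
      _ ≤ ∫ x, ‖u‖ * ‖h x‖ ∂haarAddCircle := by
          refine integral_mono (hint u).norm (hi.norm.const_mul _) fun x => ?_
          rw [norm_mul]
          exact mul_le_mul_of_nonneg_right (u.norm_coe_le_norm x) (norm_nonneg _)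
      _ = (∫ x, ‖h x‖ ∂haarAddCircle) * ‖u‖ := by
          rw [integral_const_mul, mul_comm]
  let Λ : C(AddCircle T, ℂ) →L[ℂ] ℂ := L.mkContinuous _ hbound
  have hker : Submodule.span ℂ (Set.range (@fourier T)) ≤ LinearMap.ker (Λ : C(AddCircle T, ℂ) →ₗ[ℂ] ℂ) := by
    rw [Submodule.span_le]
    rintro - ⟨n, rfl⟩
    simp only [SetLike.mem_coe, LinearMap.mem_ker]
    show (∫ x, fourier n x * h x ∂haarAddCircle) = 0
    have h0 := hc (-n)
    rw [fourierCoeff] at h0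
    simpa only [neg_neg, smul_eq_mul] using h0
  intro u
  have hu : u ∈ (Submodule.span ℂ (Set.range (@fourier T))).topologicalClosure := by
    rw [span_fourier_closure_eq_top]; trivial
  have hle := Submodule.topologicalClosure_minimal _ hker (ContinuousLinearMap.isClosed_ker Λ)
  exact LinearMap.mem_ker.mp (hle hu)

/-- Multiplication of an `L²` function by a Fourier monomial stays in `L²`. -/
lemma wiener_memℒp_fourier_mul (n : ℤ) (f : Lp ℂ 2 (haarAddCircle (T := T))) :
    MemLp (fun θ => fourier n θ * f θ) 2 (haarAddCircle (T := T)) := by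
  refine MemLp.of_le_mul (c := 1) (Lp.memLp f)
    (((fourier n).continuous.aestronglyMeasurable).mul (Lp.aestronglyMeasurable f)) ?_
  refine Filter.Eventually.of_forall fun θ => ?_
  rw [norm_mul]
  have h1 : ‖fourier n θ‖ = 1 := Circle.norm_coe _
  rw [h1, one_mul]

/-- Multiplication by a Fourier monomial, as a map of `L²`. -/
noncomputable def wienerMulLp (n : ℤ) (f : Lp ℂ 2 (haarAddCircle (T := T))) :
    Lp ℂ 2 (haarAddCircle (T := T)) :=
  (wiener_memℒp_fourier_mul n f).toLp _

lemma wiener_coeFn_mulLp (n : ℤ) (f : Lp ℂ 2 (haarAddCircle (T := T))) :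
    ⇑(wienerMulLp n f) =ᵐ[haarAddCircle] fun θ => fourier n θ * f θ :=
  MemLp.coeFn_toLp _

end Aux

section Main

open AddCircle

variable {T : ℝ} [hT : Fact (0 < T)]

lemma wiener_mono_inv (𝓔 : Submodule ℂ (Lp ℂ 2 (haarAddCircle (T := T))))
    (hinv : ∀ g ∈ 𝓔, ∀ h : Lp ℂ 2 (haarAddCircle (T := T)),
      (⇑h =ᵐ[haarAddCircle] fun θ => fourier (1 : ℤ) θ * g θ) → h ∈ 𝓔)
    (hsurj : ∀ g ∈ 𝓔, ∃ g' ∈ 𝓔,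
      ⇑g =ᵐ[haarAddCircle] fun θ => fourier (1 : ℤ) θ * g' θ) :
    ∀ n : ℤ, ∀ g ∈ 𝓔, ∀ h : Lp ℂ 2 (haarAddCircle (T := T)),
      (⇑h =ᵐ[haarAddCircle] fun θ => fourier n θ * g θ) → h ∈ 𝓔 := by
  intro n
  induction n using Int.induction_on with
  | zero =>
    intro g hg h hh
    have : h = g := by
      apply Lp.ext
      filter_upwards [hh] with θ h1
      rw [h1, fourier_zero, one_mul]
    exact this ▸ hg
  | succ i ih =>
    intro g hg h hh
    have hk : wienerMulLp (i : ℤ) g ∈ 𝓔 := ih g hg _ (wiener_coeFn_mulLp _ _)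
    refine hinv _ hk h ?_
    filter_upwards [hh, wiener_coeFn_mulLp (T := T) (i : ℤ) g] with θ h1 h2
    have e : (1 + (i : ℤ)) = ((i : ℤ) + 1) := add_comm _ _
    rw [h1, h2, ← mul_assoc, ← fourier_add, e]
  | pred i ih =>
    intro g hg h hh
    have hk : wienerMulLp (-i : ℤ) g ∈ 𝓔 := ih g hg _ (wiener_coeFn_mulLp _ _)
    obtain ⟨k', hk', hkk'⟩ := hsurj _ hk
    have : h = k' := by
      apply Lp.ext
      filter_upwards [hh, wiener_coeFn_mulLp (T := T) (-i : ℤ) g, hkk'] with θ h1 h2 h3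
      have h4 : fourier (1 : ℤ) θ * k' θ = fourier (-i : ℤ) θ * g θ := by rw [← h3, h2]
      have h5 : k' θ = fourier (-1 : ℤ) θ * (fourier (1 : ℤ) θ * k' θ) := by
        rw [← mul_assoc, ← fourier_add]
        norm_num [fourier_zero]
      have e : (-1 + -(i : ℤ)) = (-(i : ℤ) - 1) := by ring
      rw [h1, h5, h4, ← mul_assoc, ← fourier_add, e]
    exact this ▸ hk'

end Main

set_option maxHeartbeats 1000000 in
set_option synthInstance.maxHeartbeats 400000 in
/-- Wiener's theorem: a doubly invariant closed subspace of `L²(𝕋)` is of the form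
`1_A · L²(𝕋)` for a Borel set `A ⊆ 𝕋`, i.e. it consists exactly of the functions
vanishing a.e. off `A`. -/
theorem wiener_doubly_invariant
    (𝓔 : Submodule ℂ (Lp ℂ 2 (AddCircle.haarAddCircle (T := 2 * Real.pi))))
    (hclosed : IsClosed (𝓔 : Set (Lp ℂ 2 (AddCircle.haarAddCircle (T := 2 * Real.pi)))))
    (hinv : ∀ g ∈ 𝓔, ∀ h : Lp ℂ 2 (AddCircle.haarAddCircle (T := 2 * Real.pi)),
      (⇑h =ᵐ[AddCircle.haarAddCircle] fun θ => fourier (1 : ℤ) θ * g θ) → h ∈ 𝓔)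
    (hsurj : ∀ g ∈ 𝓔, ∃ g' ∈ 𝓔,
      ⇑g =ᵐ[AddCircle.haarAddCircle] fun θ => fourier (1 : ℤ) θ * g' θ) :
    ∃ A : Set (AddCircle (2 * Real.pi)), MeasurableSet A ∧
      ∀ h : Lp ℂ 2 (AddCircle.haarAddCircle (T := 2 * Real.pi)),
        h ∈ 𝓔 ↔ (∀ᵐ θ ∂(AddCircle.haarAddCircle), θ ∉ A → h θ = 0) := by
  classical
  haveI : CompleteSpace ↥𝓔 := hclosed.completeSpace_coe
  have minv := wiener_mono_inv 𝓔 hinv hsurj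
  -- an element of `𝓔` multiplied with the conjugate of an element of `𝓔ᗮ` vanishes a.e.
  have claim1 : ∀ f ∈ 𝓔, ∀ v ∈ 𝓔ᗮ,
      (fun θ => f θ * (starRingEnd ℂ) (v θ)) =ᵐ[AddCircle.haarAddCircle (T := 2 * Real.pi)] 0 := by
    intro f hf v hv
    have hInt : Integrable (fun θ => f θ * (starRingEnd ℂ) (v θ)) (AddCircle.haarAddCircle (T := 2 * Real.pi)) := by
      have := MeasureTheory.L2.integrable_inner (𝕜 := ℂ) v f
      refine this.congr (Filter.Eventually.of_forall fun θ => ?_)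
      simp only [RCLike.inner_apply]
    apply wiener_aux_fourier _ hInt
    intro n
    have hk : wienerMulLp (-n) f ∈ 𝓔 := minv (-n) f hf _ (wiener_coeFn_mulLp _ _)
    have horto : (inner ℂ (wienerMulLp (-n) f) v : ℂ) = 0 :=
      (Submodule.mem_orthogonal 𝓔 v).mp hv _ hk
    rw [fourierCoeff]
    calc (∫ θ, fourier (-n) θ • (f θ * (starRingEnd ℂ) (v θ)) ∂(AddCircle.haarAddCircle (T := 2 * Real.pi)))
        = ∫ θ, (starRingEnd ℂ) (inner ℂ ((wienerMulLp (-n) f) θ) (v θ) : ℂ) ∂(AddCircle.haarAddCircle (T := 2 * Real.pi)) := by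
          refine integral_congr_ae ?_
          filter_upwards [wiener_coeFn_mulLp (-n) f] with θ hθ
          rw [hθ]
          simp only [smul_eq_mul, RCLike.inner_apply, map_mul, Complex.conj_conj]
          ring
      _ = (starRingEnd ℂ)
            (∫ θ, (inner ℂ ((wienerMulLp (-n) f) θ) (v θ) : ℂ) ∂(AddCircle.haarAddCircle (T := 2 * Real.pi))) := integral_conj
      _ = 0 := by rw [← MeasureTheory.L2.inner_def, horto, map_zero]
  -- the projection of the constant function 1
  set one : Lp ℂ 2 (AddCircle.haarAddCircle (T := 2 * Real.pi)) := (memLp_const (1 : ℂ)).toLp _ with hone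
  set φ : Lp ℂ 2 (AddCircle.haarAddCircle (T := 2 * Real.pi)) := ↑(𝓔.orthogonalProjectionOnto one) with hφdef
  have hφ : φ ∈ 𝓔 := SetLike.coe_mem _
  set ψ : Lp ℂ 2 (AddCircle.haarAddCircle (T := 2 * Real.pi)) := one - φ with hψdef
  have hψ : ψ ∈ 𝓔ᗮ := Submodule.sub_starProjection_mem_orthogonal (K := 𝓔) one
  have hψcoe : ⇑ψ =ᵐ[AddCircle.haarAddCircle (T := 2 * Real.pi)] fun θ => 1 - φ θ := by
    have h1 : ⇑one =ᵐ[AddCircle.haarAddCircle (T := 2 * Real.pi)] fun _ => (1 : ℂ) := MemLp.coeFn_toLp _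
    filter_upwards [Lp.coeFn_sub one φ, h1] with θ t1 t2
    rw [t1, Pi.sub_apply, t2]
  -- `φ` is a.e. `{0,1}`-valued
  have E1 : ∀ᵐ θ ∂(AddCircle.haarAddCircle (T := 2 * Real.pi)), φ θ = 0 ∨ φ θ = 1 := by
    filter_upwards [claim1 φ hφ ψ hψ, hψcoe] with θ t1 t2
    simp only [Pi.zero_apply] at t1
    rw [t2] at t1
    have hc : φ θ = φ θ * (starRingEnd ℂ) (φ θ) := by
      rw [map_sub, map_one, mul_sub, mul_one] at t1
      exact sub_eq_zero.mp t1
    rw [Complex.mul_conj] at hc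
    have him : (φ θ).im = 0 := by rw [hc]; exact Complex.ofReal_im _
    have hre : (φ θ).re = Complex.normSq (φ θ) := by
      conv_lhs => rw [hc]
      exact Complex.ofReal_re _
    have hre2 : (φ θ).re = (φ θ).re * (φ θ).re := by
      have h' := hre
      rw [Complex.normSq_apply, him, mul_zero, add_zero] at h'
      exact h'
    have h01 : (φ θ).re = 0 ∨ (φ θ).re = 1 := by
      have hz : (φ θ).re * ((φ θ).re - 1) = 0 := by
        rw [mul_sub, mul_one, ← hre2, sub_self]
      rcases mul_eq_zero.mp hz with h | h
      · exact Or.inl h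
      · exact Or.inr (by linarith [sub_eq_zero.mp h])
    rcases h01 with h | h
    · exact Or.inl (Complex.ext (by simpa using h) (by simpa using him))
    · exact Or.inr (Complex.ext (by simpa using h) (by simpa using him))
  refine ⟨⇑φ ⁻¹' {1}, (Lp.stronglyMeasurable φ).measurable (measurableSet_singleton 1), ?_⟩
  have fwd : ∀ f, f ∈ 𝓔 → ∀ᵐ θ ∂(AddCircle.haarAddCircle (T := 2 * Real.pi)), θ ∉ ⇑φ ⁻¹' {1} → f θ = 0 := by
    intro f hf
    filter_upwards [claim1 f hf ψ hψ, hψcoe, E1] with θ t1 t2 t3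
    intro hθA
    have hφ0 : φ θ = 0 := t3.resolve_right (by simpa using hθA)
    simp only [Pi.zero_apply] at t1
    rw [t2, hφ0] at t1
    simpa using t1
  intro f
  constructor
  · exact fwd f
  · intro hfa
    set P : Lp ℂ 2 (AddCircle.haarAddCircle (T := 2 * Real.pi)) := ↑(𝓔.orthogonalProjectionOnto f) with hPdef
    have hP : P ∈ 𝓔 := SetLike.coe_mem _
    have hw : f - P ∈ 𝓔ᗮ := Submodule.sub_starProjection_mem_orthogonal (K := 𝓔) f
    have hc := claim1 φ hφ (f - P) hw
    have hP0 := fwd P hP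
    have hw0 : ⇑(f - P) =ᵐ[AddCircle.haarAddCircle (T := 2 * Real.pi)] 0 := by
      filter_upwards [hc, hP0, Lp.coeFn_sub f P, hfa] with θ t1 t2 t3 t4
      rw [Pi.zero_apply]
      rw [Pi.sub_apply] at t3
      by_cases hA' : θ ∈ ⇑φ ⁻¹' {1}
      · have hφ1 : φ θ = 1 := hA'
        simp only [Pi.zero_apply] at t1
        rw [hφ1, one_mul] at t1
        have := congrArg (starRingEnd ℂ) t1
        simpa using this
      · rw [t3, t4 hA', t2 hA', sub_zero]
    have hfP : f = P := by
      have h0 := Lp.eq_zero_iff_ae_eq_zero.mpr hw0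
      rwa [sub_eq_zero] at h0
    rw [hfP]; exact hP
end

section
/- For 0 < q < 1 write q = e^{−r} with r > 0, and let dilog(1−z) = ∑_{n≥1} zⁿ/n² for |z| < 1. Then for every compact subset of the open unit disc there exists C > 0 such that |−log (z;q)_∞ − r^{−1}·dilog(1−z)| ≤ C for all z in that compact set and all sufficiently small r > 0, where (z;q)_∞ = ∏_{k≥0}(1 − z q^k) and log is the branch obtained by summing log(1−zq^k). -/
open Real in
lemma qp_aux_real {x : ℝ} (hx : 0 < x) :
    x⁻¹ ≤ (1 - Real.exp (-x))⁻¹ ∧ (1 - Real.exp (-x))⁻¹ ≤ x⁻¹ + 1 := by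
  have he : Real.exp (-x) < 1 := Real.exp_lt_one_iff.mpr (by linarith)
  have hd : 0 < 1 - Real.exp (-x) := by linarith
  have hle : 1 - Real.exp (-x) ≤ x := by
    nlinarith [Real.add_one_le_exp (-x)]
  constructor
  · exact inv_anti₀ hd hle
  · have key : (1 + x) * Real.exp (-x) ≤ 1 := by
      have h1 : x + 1 ≤ Real.exp x := Real.add_one_le_exp x
      have h2 : Real.exp x * Real.exp (-x) = 1 := by
        rw [← Real.exp_add]; simp
      nlinarith [Real.exp_pos (-x)]
    have h3 : x ≤ (1 + x) * (1 - Real.exp (-x)) := by nlinarith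
    have : (1 - Real.exp (-x))⁻¹ ≤ (1 + x) / x := by
      rw [← one_div, div_le_div_iff₀ hd hx]; linarith
    calc (1 - Real.exp (-x))⁻¹ ≤ (1 + x) / x := this
      _ = x⁻¹ + 1 := by field_simp

open Complex in
set_option maxHeartbeats 1000000 in
lemma qp_series {q : ℝ} (hq0 : 0 < q) (hq1 : q < 1) {z : ℂ} (hz : ‖z‖ < 1) :
    -∑' k : ℕ, Complex.log (1 - z * (q : ℂ) ^ k)
      = ∑' n : ℕ, z ^ (n + 1) / (((n : ℂ) + 1) * (1 - (q : ℂ) ^ (n + 1))) := by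
  set F : ℕ → ℕ → ℂ := fun k n => (z * (q : ℂ) ^ k) ^ (n + 1) / ((n : ℂ) + 1) with hF
  have hqk : ∀ k : ℕ, q ^ k ≤ 1 := fun k => pow_le_one₀ hq0.le hq1.le
  have hnorm : ∀ k n, ‖F k n‖ ≤ q ^ k * ‖z‖ ^ (n + 1) := by
    intro k n
    have h1 : ‖F k n‖ ≤ ‖(z * (q : ℂ) ^ k) ^ (n + 1)‖ := by
      rw [hF]
      simp only [norm_div]
      apply div_le_self (norm_nonneg _)
      have : ((n : ℂ) + 1) = ((n + 1 : ℕ) : ℂ) := by push_cast; ring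
      rw [this, Complex.norm_natCast]
      exact_mod_cast Nat.one_le_iff_ne_zero.mpr (Nat.succ_ne_zero n)
    calc ‖F k n‖ ≤ ‖(z * (q : ℂ) ^ k) ^ (n + 1)‖ := h1
      _ = (‖z‖ * q ^ k) ^ (n + 1) := by
          rw [norm_pow, norm_mul, ← Complex.ofReal_pow, Complex.norm_real,
            Real.norm_of_nonneg (by positivity)]
      _ = ‖z‖ ^ (n + 1) * (q ^ k) ^ (n + 1) := by rw [mul_pow]
      _ ≤ ‖z‖ ^ (n + 1) * (q ^ k) ^ 1 :=
          mul_le_mul_of_nonneg_left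
            (pow_le_pow_of_le_one (by positivity) (hqk k) (Nat.succ_le_succ (Nat.zero_le n)))
            (by positivity)
      _ = q ^ k * ‖z‖ ^ (n + 1) := by ring
  have hb : Summable (fun p : ℕ × ℕ => q ^ p.1 * ‖z‖ ^ (p.2 + 1)) :=
    Summable.mul_of_nonneg (f := fun k : ℕ => q ^ k) (g := fun n : ℕ => ‖z‖ ^ (n + 1))
      (summable_geometric_of_lt_one hq0.le hq1)
      (by simpa [pow_succ] using
        (summable_geometric_of_lt_one (norm_nonneg z) hz).mul_right ‖z‖)
      (fun k => pow_nonneg hq0.le k) (fun n => pow_nonneg (norm_nonneg z) _)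
  have hsum : Summable (Function.uncurry F) :=
    Summable.of_norm (Summable.of_nonneg_of_le (fun _ => norm_nonneg _)
      (fun p => hnorm p.1 p.2) hb)
  have hk : ∀ k : ℕ, HasSum (F k) (-Complex.log (1 - z * (q : ℂ) ^ k)) := by
    intro k
    have hw : ‖z * (q : ℂ) ^ k‖ < 1 := by
      rw [norm_mul]
      calc ‖z‖ * ‖((q : ℂ)) ^ k‖ ≤ ‖z‖ * 1 := by
            gcongr
            rw [← Complex.ofReal_pow, Complex.norm_real,
              Real.norm_of_nonneg (by positivity)]
            exact hqk k
        _ < 1 := by simpa using hz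
    have h := Complex.hasSum_taylorSeries_neg_log hw
    have h2 := (hasSum_nat_add_iff (f := fun n : ℕ => (z * (q : ℂ) ^ k) ^ n / n) 1).mpr
      (by simpa using h)
    refine h2.congr_fun fun n => ?_
    simp only [hF]
    push_cast
    ring_nf
  have hstep1 : -∑' k : ℕ, Complex.log (1 - z * (q : ℂ) ^ k)
      = ∑' (k : ℕ) (n : ℕ), F k n := by
    rw [← tsum_neg]
    exact tsum_congr fun k => ((hk k).tsum_eq).symm
  rw [hstep1, ← Summable.tsum_comm hsum]
  refine tsum_congr fun n => ?_
  have hgeo : ‖((q : ℂ)) ^ (n + 1)‖ < 1 := by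
    rw [← Complex.ofReal_pow, Complex.norm_real, Real.norm_of_nonneg (by positivity)]
    exact pow_lt_one₀ hq0.le hq1 (Nat.succ_ne_zero n)
  calc ∑' k : ℕ, F k n
      = ∑' k : ℕ, (z ^ (n + 1) / ((n : ℂ) + 1)) * ((q : ℂ) ^ (n + 1)) ^ k := by
        refine tsum_congr fun k => ?_
        simp only [hF]
        rw [mul_pow, ← pow_mul, ← pow_mul, Nat.mul_comm]
        ring
    _ = (z ^ (n + 1) / ((n : ℂ) + 1)) * (1 - (q : ℂ) ^ (n + 1))⁻¹ := by
        rw [tsum_mul_left, tsum_geometric_of_norm_lt_one hgeo]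
    _ = z ^ (n + 1) / (((n : ℂ) + 1) * (1 - (q : ℂ) ^ (n + 1))) := by
        field_simp

open Complex in
set_option maxHeartbeats 1000000 in
lemma qp_bound {ρ : ℝ} (hρ1 : ρ < 1) {z : ℂ} (hz : ‖z‖ ≤ ρ) {r : ℝ} (hr : 0 < r) :
    ‖(-∑' k : ℕ, Complex.log (1 - z * (Real.exp (-r) : ℂ) ^ k))
        - (1 / (r : ℂ)) * ∑' n : ℕ, z ^ (n + 1) / ((n : ℂ) + 1) ^ 2‖ ≤ (1 - ρ)⁻¹ := by
  have hρ0 : 0 ≤ ρ := le_trans (norm_nonneg z) hz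
  have hz1 : ‖z‖ < 1 := lt_of_le_of_lt hz hρ1
  set q : ℝ := Real.exp (-r) with hq
  have hq0 : 0 < q := Real.exp_pos _
  have hq1 : q < 1 := Real.exp_lt_one_iff.mpr (by linarith)
  -- the real coefficients
  set c : ℕ → ℝ := fun n => (((n : ℝ) + 1) * (1 - q ^ (n + 1)))⁻¹ - (((n : ℝ) + 1) ^ 2 * r)⁻¹
    with hc
  have hqlt : ∀ n : ℕ, q ^ (n + 1) < 1 := fun n => pow_lt_one₀ hq0.le hq1 (Nat.succ_ne_zero n)
  have hcoef : ∀ n : ℕ, |c n| ≤ 1 := by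
    intro n
    set m : ℝ := (n : ℝ) + 1 with hm
    have hm1 : 1 ≤ m := by
      have : (0 : ℝ) ≤ (n : ℝ) := Nat.cast_nonneg n
      simp only [hm]; linarith
    have hx : 0 < m * r := by positivity
    have hqe : q ^ (n + 1) = Real.exp (-(m * r)) := by
      rw [hq, ← Real.exp_nat_mul]
      congr 1
      simp only [hm]
      push_cast
      ring
    have h := qp_aux_real hx
    have hrw : c n = m⁻¹ * ((1 - Real.exp (-(m * r)))⁻¹ - (m * r)⁻¹) := by
      rw [hc]
      simp only [← hm, hqe]
      rw [mul_inv, show m ^ 2 * r = m * (m * r) by ring, mul_inv, mul_sub]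
    rw [hrw, abs_mul]
    have hf0 : 0 ≤ (1 - Real.exp (-(m * r)))⁻¹ - (m * r)⁻¹ := by linarith [h.1]
    have hf1 : (1 - Real.exp (-(m * r)))⁻¹ - (m * r)⁻¹ ≤ 1 := by linarith [h.2]
    have hmi : |m⁻¹| ≤ 1 := by
      rw [abs_of_pos (by positivity)]
      exact inv_le_one_of_one_le₀ hm1
    calc |m⁻¹| * |(1 - Real.exp (-(m * r)))⁻¹ - (m * r)⁻¹| ≤ 1 * 1 := by
          apply mul_le_mul hmi _ (abs_nonneg _) zero_le_one
          rw [_root_.abs_of_nonneg hf0]; exact hf1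
      _ = 1 := by norm_num
  -- rewrite the log sum
  rw [qp_series hq0 hq1 hz1, ← tsum_mul_left]
  set A : ℕ → ℂ := fun n => z ^ (n + 1) / (((n : ℂ) + 1) * (1 - (q : ℂ) ^ (n + 1))) with hA
  set B : ℕ → ℂ := fun n => (1 / (r : ℂ)) * (z ^ (n + 1) / ((n : ℂ) + 1) ^ 2) with hB
  have hdiff : ∀ n, A n - B n = z ^ (n + 1) * ((c n : ℝ) : ℂ) := by
    intro n
    have h1 : ((n : ℂ) + 1) ≠ 0 := by
      exact_mod_cast Nat.succ_ne_zero n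
    have h2 : (1 - (q : ℂ) ^ (n + 1)) ≠ 0 := by
      rw [sub_ne_zero]
      intro hcon
      have hcast : ((1 : ℝ) : ℂ) = ((q ^ (n + 1) : ℝ) : ℂ) := by push_cast; exact hcon
      have := Complex.ofReal_injective hcast
      linarith [hqlt n]
    have h3 : (r : ℂ) ≠ 0 := by exact_mod_cast hr.ne'
    rw [hA, hB, hc]
    push_cast
    field_simp
  have hAs : Summable A := by
    have hsumg : Summable (fun n : ℕ => (1 - q)⁻¹ * ρ ^ (n + 1)) := by
      have h0 : Summable (fun n : ℕ => ρ ^ n * ρ) :=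
        (summable_geometric_of_lt_one hρ0 hρ1).mul_right ρ
      exact (h0.mul_left (1 - q)⁻¹).congr (fun n => by rw [← pow_succ])
    apply Summable.of_norm
    refine Summable.of_nonneg_of_le (fun n => norm_nonneg _) (fun n => ?_) hsumg
    have hd0 : (0:ℝ) < ((n : ℝ) + 1) * (1 - q ^ (n + 1)) := by
      have := hqlt n
      have h01 : (0:ℝ) < (n : ℝ) + 1 := by positivity
      nlinarith
    have hcast : (((n : ℂ) + 1) * (1 - (q : ℂ) ^ (n + 1)))
        = ((((n : ℝ) + 1) * (1 - q ^ (n + 1)) : ℝ) : ℂ) := by push_cast; ring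
    rw [hA]
    simp only [norm_div, hcast, Complex.norm_real, norm_pow]
    rw [Real.norm_of_nonneg hd0.le]
    have hden : 1 - q ≤ ((n : ℝ) + 1) * (1 - q ^ (n + 1)) := by
      have hq' : q ^ (n + 1) ≤ q := by
        calc q ^ (n + 1) ≤ q ^ 1 :=
          pow_le_pow_of_le_one hq0.le hq1.le (Nat.succ_le_succ (Nat.zero_le n))
        _ = q := pow_one q
      have h01 : (1:ℝ) ≤ (n : ℝ) + 1 := by
        have : (0 : ℝ) ≤ (n : ℝ) := Nat.cast_nonneg n
        linarith
      nlinarith [hqlt n]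
    calc ‖z‖ ^ (n + 1) / (((n : ℝ) + 1) * (1 - q ^ (n + 1)))
        ≤ ρ ^ (n + 1) / (1 - q) := by
          gcongr
          all_goals first | exact hz | linarith
      _ = (1 - q)⁻¹ * ρ ^ (n + 1) := by rw [div_eq_mul_inv]; ring
  have hBs : Summable B := by
    have hsumg : Summable (fun n : ℕ => ρ ^ (n + 1)) :=
      ((summable_geometric_of_lt_one hρ0 hρ1).mul_right ρ).congr
        (fun n => by rw [← pow_succ])
    apply Summable.mul_left
    apply Summable.of_norm
    refine Summable.of_nonneg_of_le (fun n => norm_nonneg _) (fun n => ?_) hsumg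
    have hcast : (((n : ℂ) + 1) ^ 2) = ((((n : ℝ) + 1) ^ 2 : ℝ) : ℂ) := by push_cast; ring
    have h01 : (1:ℝ) ≤ ((n : ℝ) + 1) ^ 2 := by
      have : (0 : ℝ) ≤ (n : ℝ) := Nat.cast_nonneg n
      nlinarith
    simp only [norm_div, hcast, Complex.norm_real, norm_pow]
    rw [Real.norm_of_nonneg (by positivity)]
    calc ‖z‖ ^ (n + 1) / ((n : ℝ) + 1) ^ 2 ≤ ρ ^ (n + 1) / 1 := by
          gcongr
          all_goals first | exact hz | linarith
      _ = ρ ^ (n + 1) := div_one _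
  rw [← Summable.tsum_sub hAs hBs]
  have hgeo : HasSum (fun n : ℕ => ρ ^ (n + 1)) (ρ * (1 - ρ)⁻¹) := by
    have := (hasSum_geometric_of_lt_one hρ0 hρ1).mul_left ρ
    refine this.congr_fun fun n => ?_
    rw [← pow_succ']
  have hbound : ∀ n : ℕ, ‖A n - B n‖ ≤ ρ ^ (n + 1) := by
    intro n
    rw [hdiff n, norm_mul, norm_pow, Complex.norm_real]
    calc ‖z‖ ^ (n + 1) * ‖c n‖ ≤ ρ ^ (n + 1) * 1 := by
          apply mul_le_mul (by gcongr) _ (norm_nonneg _) (by positivity)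
          rw [Real.norm_eq_abs]; exact hcoef n
      _ = ρ ^ (n + 1) := mul_one _
  calc ‖∑' n, (A n - B n)‖ ≤ ρ * (1 - ρ)⁻¹ := tsum_of_norm_bounded hgeo hbound
    _ ≤ 1 * (1 - ρ)⁻¹ := by
        apply mul_le_mul_of_nonneg_right hρ1.le (inv_nonneg.mpr (by linarith))
    _ = (1 - ρ)⁻¹ := one_mul _

/-- Dilogarithm asymptotics of the q-Pochhammer symbol: with `q = e^{−r}`, uniformly on
compact subsets of the open unit disc,
`−log (z;q)_∞ = r^{−1}·dilog(1−z) + O(1)` as `r → 0⁺`, where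
`log (z;q)_∞ = ∑_{k≥0} log(1−z q^k)` and `dilog(1−z) = ∑_{n≥1} zⁿ/n²`. -/
theorem qPochhammer_dilog_asymptotics
    (K : Set ℂ) (hK : IsCompact K) (hK1 : K ⊆ Metric.ball (0 : ℂ) 1) :
    ∃ C > 0, ∃ r₀ > 0, ∀ r : ℝ, 0 < r → r < r₀ → ∀ z ∈ K,
      ‖(-∑' k : ℕ, Complex.log (1 - z * (Real.exp (-r) : ℂ) ^ k))
          - (1 / (r : ℂ)) * ∑' n : ℕ, z ^ (n + 1) / ((n : ℂ) + 1) ^ 2‖ ≤ C := by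
  rcases K.eq_empty_or_nonempty with rfl | hne
  · exact ⟨1, one_pos, 1, one_pos, fun r _ _ z hz => absurd hz (Set.notMem_empty z)⟩
  obtain ⟨z₀, hz₀K, hz₀⟩ := hK.exists_isMaxOn hne continuous_norm.continuousOn
  set ρ : ℝ := ‖z₀‖ with hρ
  have hρ1 : ρ < 1 := by simpa using hK1 hz₀K
  refine ⟨(1 - ρ)⁻¹, inv_pos.mpr (by linarith), 1, one_pos, fun r hr _ z hzK => ?_⟩
  exact qp_bound hρ1 (hz₀ hzK) hr
end

section
/- Fix τ > 0 and χ ∈ ℝ, and define S(z; τ, χ) = −(τ/2 + χ)·Log z − dilog(1 − 1/z) + dilog(1 − e^{−τ} z) on a neighborhood of the circle |z| = e^{τ/2} minus the negative reals. Then Re S(z; τ, χ) = −(τ/2)·(τ/2 + χ) for all z with |z| = e^{τ/2} off the negative real axis. -/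
/-- Okounkov–Reshetikhin phase function for plane partitions: for `τ > 0`, `χ ∈ ℝ`,
`S(z;τ,χ) = −(τ/2+χ)·Log z − dilog(1−1/z) + dilog(1−e^{−τ}z)` has constant real part
`−(τ/2)(τ/2+χ)` on the circle `|z| = e^{τ/2}` off the negative real axis. -/
theorem re_phase_constant_on_circle (τ χ : ℝ) (hτ : 0 < τ) :
    ∀ z : ℂ, ‖z‖ = Real.exp (τ / 2) → ¬(z.im = 0 ∧ z.re ≤ 0) →
      ((-(((τ / 2 + χ) : ℝ) : ℂ) * Complex.log z
          - ∑' n : ℕ, (1 / z) ^ (n + 1) / ((n : ℂ) + 1) ^ 2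
          + ∑' n : ℕ, ((Real.exp (-τ) : ℂ) * z) ^ (n + 1) / ((n : ℂ) + 1) ^ 2).re)
        = -(τ / 2) * (τ / 2 + χ) := by
  intro z hz _
  have hz0 : z ≠ 0 := by
    intro h
    rw [h, norm_zero] at hz
    exact (Real.exp_pos _).ne hz
  have hconj : ((Real.exp (-τ) : ℂ) * z) = starRingEnd ℂ (1 / z) := by
    rw [map_div₀, map_one, eq_div_iff (by simpa using hz0)]
    have hzz : z * starRingEnd ℂ z = ((Real.exp (τ / 2) ^ 2 : ℝ) : ℂ) := by
      rw [Complex.mul_conj, Complex.normSq_eq_norm_sq, hz]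
    rw [mul_assoc, hzz]
    norm_cast
    rw [sq, ← Real.exp_add, ← Real.exp_add]
    norm_num
  have hA : (∑' n : ℕ, ((Real.exp (-τ) : ℂ) * z) ^ (n + 1) / ((n : ℂ) + 1) ^ 2)
      = starRingEnd ℂ (∑' n : ℕ, (1 / z) ^ (n + 1) / ((n : ℂ) + 1) ^ 2) := by
    rw [show (starRingEnd ℂ) (∑' n : ℕ, (1 / z) ^ (n + 1) / ((n : ℂ) + 1) ^ 2)
        = star (∑' n : ℕ, (1 / z) ^ (n + 1) / ((n : ℂ) + 1) ^ 2) from rfl, tsum_star]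
    congr 1
    funext n
    rw [hconj]
    simp [star_div₀, star_pow]
  rw [hA, Complex.add_re, Complex.sub_re, Complex.conj_re]
  have hlog : (Complex.log z).re = τ / 2 := by
    rw [Complex.log_re, hz, Real.log_exp]
  simp [Complex.mul_re, hlog]
  ring
end
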